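/- For all complex numbers v, w with |v| = |w| = 1 and all real numbers β, p ∈ [1,∞), one has |v − w| + β^p − 1 ≤ √(p²+1) · |v − βw| · ((1 + β^p)/2)^{(p−1)/p}. -/

import Mathlib

open Complex MeasureTheory
open scoped Classical

noncomputable section

variable {X : Type*}

/-- The structural hypotheses of a magnetic graph `(b, θ, q, m)` over `X`:
`b` is nonnegative, symmetric, has zero diagonal and summable rows; the
magnetic potential `θ` is antisymmetric modulo `2π`; the measure `m` is positive. -/
def IsMagneticGraph (b θ : X → X → ℝ) (m : X → ℝ) : Prop :=
  (∀ x y, 0 ≤ b x y) ∧ (∀ x y, b x y = b y x) ∧ (∀ x, b x x = 0) ∧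
  (∀ x, Summable fun y => b x y) ∧
  (∀ x y, ∃ k : ℤ, θ x y + θ y x = 2 * Real.pi * k) ∧
  (∀ x, 0 < m x)

/-- The `p`-frustration index `ι_{p,θ}(W)` of a finite set `W`. -/
def frust (b θ : X → X → ℝ) (p : ℝ) (W : Finset X) : ℝ :=
  sInf {r : ℝ | ∃ τ : X → ℂ, (∀ x ∈ W, ‖τ x‖ = 1) ∧
    r = (1 / 2) * ∑ x ∈ W, ∑ y ∈ W,
      b x y * ‖τ x - Complex.exp ((θ x y : ℂ) * Complex.I) * τ y‖ ^ p}

/-- The measure `b(∂W)` of the boundary `∂W = (W×(X∖W)) ∪ ((X∖W)×W)`. -/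
def bBoundary (b : X → X → ℝ) (W : Finset X) : ℝ :=
  (∑ x ∈ W, ∑' y : {y : X // y ∉ W}, b x ↑y) +
  (∑ y ∈ W, ∑' x : {x : X // x ∉ W}, b ↑x y)

/-- `(a,k)_p`-magnetic-sparseness. -/
def MagSparse (b θ : X → X → ℝ) (q m : X → ℝ) (p a k : ℝ) : Prop :=
  ∀ W : Finset X,
    (∑ x ∈ W, ∑ y ∈ W, b x y) ≤
      (1 + a) * frust b θ p W +
      a * ((1 / 2) * bBoundary b W + ∑ x ∈ W, max (q x) 0 * m x) +
      k * ∑ x ∈ W, m x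

/-- The energy functional `Q_{p,θ}` on finitely supported functions. -/
def Qform (b θ : X → X → ℝ) (q m : X → ℝ) (p : ℝ) (f : X → ℂ) : ℝ :=
  (1 / 2) * ∑' x, ∑' y, b x y * ‖f x - Complex.exp ((θ x y : ℂ) * Complex.I) * f y‖ ^ p +
  ∑' x, q x * ‖f x‖ ^ p * m x

/-- The weighted vertex degree `Deg(x) = (1/m(x)) Σ_y b(x,y) + q(x)`. -/
def Degf (b : X → X → ℝ) (q m : X → ℝ) (x : X) : ℝ :=
  (1 / m x) * ∑' y, b x y + q x

/-- The pairing `⟨Deg, |f|^p⟩ = Σ_x Deg(x) |f(x)|^p m(x)`. -/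
def degPair (b : X → X → ℝ) (q m : X → ℝ) (p : ℝ) (f : X → ℂ) : ℝ :=
  ∑' x, Degf b q m x * ‖f x‖ ^ p * m x

/-- The `p`-norm to the `p`: `‖f‖_p^p = Σ_x |f(x)|^p m(x)`. -/
def pNorm (m : X → ℝ) (p : ℝ) (f : X → ℂ) : ℝ :=
  ∑' x, ‖f x‖ ^ p * m x

/-- `q ∈ K_α^{p,θ}` with constant `C`: the negative part of `q` is form bounded. -/
def InKClass (b θ : X → X → ℝ) (q m : X → ℝ) (p α C : ℝ) : Prop :=
  ∀ f : X → ℂ, (Function.support f).Finite →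
    (∑' x, max (-q x) 0 * ‖f x‖ ^ p * m x) ≤
      α * Qform b θ (fun x => max (q x) 0) m p f + C * pNorm m p f


lemma young_aux (p x : ℝ) (hp : 1 ≤ p) (hx : 0 < x) :
    p * x ^ (p - 1) ≤ 1 + (p - 1) * x ^ p := by
  have hp0 : 0 < p := lt_of_lt_of_le one_pos hp
  have h := Real.geom_mean_le_arith_mean2_weighted
    (w₁ := (p-1)/p) (w₂ := 1/p) (p₁ := x ^ p) (p₂ := 1)
    (div_nonneg (by linarith) hp0.le) (by positivity)
    (Real.rpow_nonneg hx.le p) zero_le_one (by field_simp; ring)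
  rw [Real.one_rpow, mul_one, ← Real.rpow_mul hx.le] at h
  have he : p * ((p - 1) / p) = p - 1 := by field_simp
  rw [he] at h
  have := mul_le_mul_of_nonneg_left h hp0.le
  calc p * x ^ (p-1) ≤ p * ((p - 1) / p * x ^ p + 1 / p * 1) := this
    _ = 1 + (p - 1) * x ^ p := by field_simp; ring

lemma young_aux2 (p x M : ℝ) (hp : 1 ≤ p) (hx : 0 < x) (hM : 0 < M) :
    x ^ (p - 1) * M ^ (1 / p) ≤ (p - 1) / p * x ^ p + 1 / p * M := by
  have hp0 : 0 < p := lt_of_lt_of_le one_pos hp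
  have h := Real.geom_mean_le_arith_mean2_weighted
    (w₁ := (p-1)/p) (w₂ := 1/p) (p₁ := x ^ p) (p₂ := M)
    (div_nonneg (by linarith) hp0.le) (by positivity)
    (Real.rpow_nonneg hx.le p) hM.le (by field_simp; ring)
  rw [← Real.rpow_mul hx.le] at h
  have he : p * ((p - 1) / p) = p - 1 := by field_simp
  rwa [he] at h

lemma keyK (p β : ℝ) (hp : 1 ≤ p) (hβ : 1 ≤ β) :
    β ^ p - 1 ≤ p * (β - 1) * ((1 + β ^ p) / 2) ^ ((p - 1) / p) := by
  have hp0 : 0 < p := lt_of_lt_of_le one_pos hp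
  set q : ℝ := (p - 1) / p with hq
  set F : ℝ → ℝ := fun x => p * (x - 1) * ((1 + x ^ p) / 2) ^ q - x ^ p + 1 with hF
  -- derivative of F
  have hderiv : ∀ x : ℝ, 0 < x → HasDerivAt F
      (p * ((1 + x ^ p) / 2) ^ q +
        p * (x - 1) * (q * ((1 + x ^ p) / 2) ^ (q - 1) * (p * x ^ (p - 1) / 2))
        - p * x ^ (p - 1)) x := by
    intro x hx
    have hM : 0 < (1 + x ^ p) / 2 := by positivity
    have h1 : HasDerivAt (fun x : ℝ => x ^ p) (p * x ^ (p - 1)) x :=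
      Real.hasDerivAt_rpow_const (Or.inl hx.ne')
    have h2 : HasDerivAt (fun x : ℝ => (1 + x ^ p) / 2) (p * x ^ (p - 1) / 2) x :=
      (h1.const_add 1).div_const 2
    have h3 : HasDerivAt (fun y : ℝ => y ^ q) (q * ((1 + x ^ p) / 2) ^ (q - 1))
        ((1 + x ^ p) / 2) := Real.hasDerivAt_rpow_const (Or.inl hM.ne')
    have h4 : HasDerivAt (fun x : ℝ => ((1 + x ^ p) / 2) ^ q)
        (q * ((1 + x ^ p) / 2) ^ (q - 1) * (p * x ^ (p - 1) / 2)) x := by have := h3.comp x h2; exact this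
    have h5 : HasDerivAt (fun x : ℝ => p * (x - 1)) p x := by
      simpa using ((hasDerivAt_id x).sub_const 1).const_mul p
    have h6 := (h5.mul h4).sub h1
    have h7 := h6.add_const 1
    exact h7
  -- deriv is nonneg on (1, ∞)
  have hdnn : ∀ x : ℝ, 1 < x → 0 ≤ deriv F x := by
    intro x hx1
    have hx : 0 < x := lt_trans one_pos hx1
    rw [(hderiv x hx).deriv]
    set M : ℝ := (1 + x ^ p) / 2 with hMdef
    have hM : 0 < M := by positivity
    have ht : 0 < M ^ (1 / p) := Real.rpow_pos_of_pos hM _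
    rw [← mul_nonneg_iff_of_pos_right ht]
    have hMt : M ^ q * M ^ (1 / p) = M := by
      rw [← Real.rpow_add hM, hq]
      rw [show (p - 1) / p + 1 / p = 1 by field_simp; ring, Real.rpow_one]
    have h2t : M ^ (q - 1) * M ^ (1 / p) = 1 := by
      rw [← Real.rpow_add hM, hq]
      rw [show (p - 1) / p - 1 + 1 / p = 0 by field_simp; ring, Real.rpow_zero]
    have expand : (p * M ^ q + p * (x - 1) * (q * M ^ (q - 1) * (p * x ^ (p - 1) / 2))
        - p * x ^ (p - 1)) * M ^ (1 / p)
        = p * (M ^ q * M ^ (1 / p)) + (q * p) * (x - 1) * (p * x ^ (p - 1) / 2) *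
          (M ^ (q - 1) * M ^ (1 / p)) - p * (x ^ (p - 1) * M ^ (1 / p)) := by ring
    have hqp : q * p = p - 1 := by rw [hq]; field_simp
    rw [expand, hMt, h2t, hqp, mul_one]
    have hy2 := young_aux2 p x M hp hx hM
    have hy1 := young_aux p x hp hx
    have hxx : x ^ p = x * x ^ (p - 1) := by
      have h := Real.rpow_add hx 1 (p - 1)
      rw [Real.rpow_one] at h
      rw [show (1:ℝ) + (p - 1) = p by ring] at h
      exact h
    -- p * (x^(p-1) * M^(1/p)) ≤ (p-1) x^p + M
    have h8 : p * (x ^ (p - 1) * M ^ (1 / p)) ≤ (p - 1) * x ^ p + M := by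
      have := mul_le_mul_of_nonneg_left hy2 hp0.le
      calc p * (x ^ (p - 1) * M ^ (1 / p)) ≤ p * ((p - 1) / p * x ^ p + 1 / p * M) := this
        _ = (p - 1) * x ^ p + M := by field_simp
    have hMx : (p - 1) * x ^ p ≤ (p - 1) * M + (p - 1) * (x - 1) * (p * x ^ (p - 1) / 2) := by
      have h9 : x ^ p - 1 ≤ p * (x - 1) * x ^ (p - 1) := by nlinarith [hy1, hxx]
      have h10 : M + (x - 1) * (p * x ^ (p - 1) / 2) - x ^ p =
          (p * (x - 1) * x ^ (p - 1) - (x ^ p - 1)) / 2 := by rw [hMdef]; ring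
      nlinarith [mul_le_mul_of_nonneg_left h9 (show (0:ℝ) ≤ p - 1 by linarith)]
    linarith
  -- monotonicity
  have hmono : MonotoneOn F (Set.Ici (1:ℝ)) := by
    apply monotoneOn_of_deriv_nonneg (convex_Ici 1)
    · intro x hx
      exact ((hderiv x (lt_of_lt_of_le one_pos hx)).continuousAt).continuousWithinAt
    · intro x hx
      rw [interior_Ici] at hx
      exact ((hderiv x (lt_trans one_pos hx)).differentiableAt).differentiableWithinAt
    · intro x hx
      rw [interior_Ici] at hx
      exact hdnn x hx
  have h0 : F 1 = 0 := by simp [hF, Real.one_rpow]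
  have := hmono (Set.self_mem_Ici) (Set.mem_Ici.mpr hβ) hβ
  rw [h0] at this
  simp only [hF] at this
  linarith

/-- the elementary inequality
`|v − w| + β^p − 1 ≤ √(p²+1)·|v − βw|·((1+β^p)/2)^{(p−1)/p}` for unit vectors `v, w ∈ ℂ`
and `β, p ∈ [1,∞)`. -/
theorem unit_vectors_beta_rpow (v w : ℂ) (hv : ‖v‖ = 1) (hw : ‖w‖ = 1)
    (β p : ℝ) (hβ : 1 ≤ β) (hp : 1 ≤ p) :
    ‖v - w‖ + β ^ p - 1 ≤
      Real.sqrt (p ^ 2 + 1) * ‖v - (β : ℂ) * w‖ * ((1 + β ^ p) / 2) ^ ((p - 1) / p) := by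
  
  have hβ0 : (0:ℝ) < β := lt_of_lt_of_le one_pos hβ
  have hβp : 1 ≤ β ^ p := by
    calc (1:ℝ) = 1 ^ p := (Real.one_rpow p).symm
      _ ≤ β ^ p := Real.rpow_le_rpow zero_le_one hβ (by linarith)
  set c : ℝ := ((1 + β ^ p) / 2) ^ ((p - 1) / p) with hcdef
  have hc1 : 1 ≤ c := by
    calc (1:ℝ) = 1 ^ ((p - 1) / p) := (Real.one_rpow _).symm
      _ ≤ c := Real.rpow_le_rpow zero_le_one (by linarith) (div_nonneg (by linarith) (by linarith))
  set s : ℝ := ‖v - w‖ with hsdef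
  have hs0 : 0 ≤ s := norm_nonneg _
  have habs : ∀ z : ℂ, ‖z‖ ^ 2 = z.re ^ 2 + z.im ^ 2 := fun z => by
    rw [Complex.sq_norm, Complex.normSq_apply]; ring
  have hv2 : v.re ^ 2 + v.im ^ 2 = 1 := by rw [← habs v, hv]; norm_num
  have hw2 : w.re ^ 2 + w.im ^ 2 = 1 := by rw [← habs w, hw]; norm_num
  have hid : ‖v - (β : ℂ) * w‖ ^ 2 = (β - 1) ^ 2 + β * s ^ 2 := by
    rw [hsdef, habs, habs]
    simp only [Complex.sub_re, Complex.sub_im, Complex.mul_re, Complex.mul_im,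
      Complex.ofReal_re, Complex.ofReal_im]
    linear_combination (1 - β) * hv2 + (β ^ 2 - β) * hw2
  have step1 : s + β ^ p - 1 ≤ c * (s + p * (β - 1)) := by
    nlinarith [keyK p β hp hβ, hs0, hc1]
  have step2 : s + p * (β - 1) ≤ Real.sqrt (p ^ 2 + 1) * Real.sqrt (s ^ 2 + (β - 1) ^ 2) := by
    have hb0 : (0:ℝ) ≤ β - 1 := by linarith
    have hsq : (s + p * (β - 1)) ^ 2 ≤ (p ^ 2 + 1) * (s ^ 2 + (β - 1) ^ 2) := by
      nlinarith [sq_nonneg (p * s - (β - 1))]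
    calc s + p * (β - 1) = Real.sqrt ((s + p * (β - 1)) ^ 2) := by
          rw [Real.sqrt_sq (by positivity)]
      _ ≤ Real.sqrt ((p ^ 2 + 1) * (s ^ 2 + (β - 1) ^ 2)) := Real.sqrt_le_sqrt hsq
      _ = Real.sqrt (p ^ 2 + 1) * Real.sqrt (s ^ 2 + (β - 1) ^ 2) :=
          Real.sqrt_mul (by positivity) _
  have step3 : Real.sqrt (s ^ 2 + (β - 1) ^ 2) ≤ ‖v - (β : ℂ) * w‖ := by
    rw [show ‖v - (β : ℂ) * w‖ = Real.sqrt (‖v - (β : ℂ) * w‖ ^ 2) from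
      (Real.sqrt_sq (norm_nonneg _)).symm]
    apply Real.sqrt_le_sqrt
    rw [hid]
    nlinarith [sq_nonneg s]
  have hc0 : (0:ℝ) ≤ c := by linarith
  calc s + β ^ p - 1 ≤ c * (s + p * (β - 1)) := step1
    _ ≤ c * (Real.sqrt (p ^ 2 + 1) * Real.sqrt (s ^ 2 + (β - 1) ^ 2)) :=
        mul_le_mul_of_nonneg_left step2 hc0
    _ ≤ c * (Real.sqrt (p ^ 2 + 1) * ‖v - (β : ℂ) * w‖) :=
        mul_le_mul_of_nonneg_left
          (mul_le_mul_of_nonneg_left step3 (Real.sqrt_nonneg _)) hc0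
    _ = Real.sqrt (p ^ 2 + 1) * ‖v - (β : ℂ) * w‖ * c := by ring
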